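/- Let Ω ⊂ ℝⁿ be a bounded open set with C² boundary, let (t,x) ∈ (0,T)×∂Ω, let ν(x) be the outward unit normal to ∂Ω at x, and let v ∈ ℝⁿ satisfy ⟨v,ν(x)⟩ = 0. Then there exists an absolutely continuous curve γ̂ : [0,T] → Ω̄ with γ̂(t) = x that is differentiable at t with derivative γ̂'(t) = v. -/

import Mathlib

open MeasureTheory Filter Metric Set Topology
noncomputable section

/-- Euclidean space `ℝⁿ`. -/
abbrev E (n : ℕ) := EuclideanSpace ℝ (Fin n)

/-- The oriented boundary distance `b_Ω = d_Ω − d_{Ωᶜ}`. -/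
def oriDist {n : ℕ} (Ω : Set (E n)) (x : E n) : ℝ :=
  Metric.infDist x Ω - Metric.infDist x Ωᶜ

/-- `Ω` has `C²` boundary: the oriented boundary distance is `C²` on a tube around `∂Ω`. -/
def HasC2Boundary {n : ℕ} (Ω : Set (E n)) : Prop :=
  ∃ ρ > 0, ContDiffOn ℝ 2 (oriDist Ω) {y | ∃ x ∈ frontier Ω, dist y x < ρ}

/-- The outward unit normal at a boundary point (the gradient of the oriented distance). -/
def outerNormal {n : ℕ} (Ω : Set (E n)) (x : E n) : E n := gradient (oriDist Ω) x

/-- The (Fréchet) superdifferential of `u` at `x`, relative to the set `S`: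
`D⁺u(x) = {p | limsup_{y→x, y∈S} (u(y)−u(x)−⟨p,y−x⟩)/‖y−x‖ ≤ 0}`. -/
def superDiffOn {n : ℕ} (S : Set (E n)) (u : E n → ℝ) (x : E n) : Set (E n) :=
  {p | ∀ ε > 0, ∃ δ > 0, ∀ y ∈ S, ‖y - x‖ < δ →
      u y - u x - (inner ℝ p (y - x) : ℝ) ≤ ε * ‖y - x‖}

/-- `γ` is absolutely continuous on `[a,b]`, with (interval-)integrable derivative. -/
def IsACOn {n : ℕ} (γ : ℝ → E n) (a b : ℝ) : Prop :=
  ∃ γ' : ℝ → E n, IntervalIntegrable γ' volume a b ∧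
    ∀ s ∈ Set.Icc a b, γ s = γ a + ∫ r in a..s, γ' r

/-- The class `Γ` of absolutely continuous curves on `[0,T]` with values in `Ω̄`. -/
def AdmCurves {n : ℕ} (Ω : Set (E n)) (T : ℝ) : Set (ℝ → E n) :=
  {γ | IsACOn γ 0 T ∧ ∀ s ∈ Set.Icc 0 T, γ s ∈ closure Ω}

section Aux

variable {n : ℕ} {Ω : Set (E n)}

lemma oriDist_continuous (Ω : Set (E n)) : Continuous (oriDist Ω) :=
  (Metric.continuous_infDist_pt Ω).sub (Metric.continuous_infDist_pt Ωᶜ)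

lemma oriDist_nonpos_of_mem_closure {z : E n} (hz : z ∈ closure Ω) : oriDist Ω z ≤ 0 := by
  have h1 : Metric.infDist z Ω = 0 := Metric.infDist_zero_of_mem_closure hz
  have h2 : 0 ≤ Metric.infDist z Ωᶜ := Metric.infDist_nonneg
  simp only [oriDist, h1]
  linarith

lemma mem_closure_of_oriDist_nonpos (hΩne : Ω.Nonempty) {z : E n}
    (hz : oriDist Ω z ≤ 0) : z ∈ closure Ω := by
  by_contra hmem
  have h1 : 0 < Metric.infDist z (closure Ω) :=
    (isClosed_closure.notMem_iff_infDist_pos hΩne.closure).mp hmem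
  rw [Metric.infDist_closure] at h1
  have h2 : Metric.infDist z Ωᶜ = 0 :=
    Metric.infDist_zero_of_mem (fun h => hmem (subset_closure h))
  simp only [oriDist, h2] at hz
  linarith

lemma oriDist_eq_zero_of_mem_frontier {z : E n} (hz : z ∈ frontier Ω) : oriDist Ω z = 0 := by
  have h1 : Metric.infDist z Ω = 0 := Metric.infDist_zero_of_mem_closure hz.1
  have h2 : Metric.infDist z Ωᶜ = 0 := by
    refine Metric.infDist_zero_of_mem_closure ?_
    rw [closure_compl]
    exact fun hint => hz.2 hint
  simp [oriDist, h1, h2]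

lemma mem_frontier_of_oriDist_eq_zero (hΩo : IsOpen Ω) (hΩne : Ω.Nonempty)
    (hΩc : Ωᶜ.Nonempty) {z : E n} (hz : oriDist Ω z = 0) : z ∈ frontier Ω := by
  have hcl : z ∈ closure Ω := mem_closure_of_oriDist_nonpos hΩne (le_of_eq hz)
  have h1 : Metric.infDist z Ω = 0 := Metric.infDist_zero_of_mem_closure hcl
  have hzn : z ∉ Ω := by
    intro hmem
    have h2 : 0 < Metric.infDist z Ωᶜ := by
      refine (hΩo.isClosed_compl.notMem_iff_infDist_pos hΩc).mp ?_
      simpa using hmem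
    simp only [oriDist, h1] at hz
    linarith
  rw [hΩo.frontier_eq]
  exact ⟨hcl, hzn⟩

/-- crossing lemma: a segment from a point with `b ≤ 0` to a point with `b ≥ 0` meets the
frontier, at distance at most `dist y z` from both endpoints. -/
lemma oriDist_crossing (hΩo : IsOpen Ω) (hΩne : Ω.Nonempty) (hΩc : Ωᶜ.Nonempty)
    {y z : E n} (hy : oriDist Ω y ≤ 0) (hz : 0 ≤ oriDist Ω z) :
    ∃ w ∈ frontier Ω, dist y w ≤ dist y z ∧ dist z w ≤ dist y z := by
  set f : ℝ → ℝ := fun c => oriDist Ω (y + c • (z - y)) with hf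
  have hfc : ContinuousOn f (Set.Icc 0 1) := by
    apply Continuous.continuousOn
    exact (oriDist_continuous Ω).comp (by continuity)
  have hf0 : f 0 = oriDist Ω y := by simp [hf]
  have hf1 : f 1 = oriDist Ω z := by simp [hf]
  have h0 : (0 : ℝ) ∈ Set.Icc (f 0) (f 1) := by rw [hf0, hf1]; exact ⟨hy, hz⟩
  obtain ⟨c, hc, hfc0⟩ := intermediate_value_Icc zero_le_one hfc h0
  refine ⟨y + c • (z - y), mem_frontier_of_oriDist_eq_zero hΩo hΩne hΩc hfc0, ?_, ?_⟩
  · have h1 : dist y (y + c • (z - y)) = c * dist y z := by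
      rw [dist_eq_norm, dist_eq_norm]
      simp [norm_smul, abs_of_nonneg hc.1, norm_sub_rev z y]
    rw [h1]
    nlinarith [dist_nonneg (x := y) (y := z), hc.1, hc.2]
  · have h1 : dist z (y + c • (z - y)) = (1 - c) * dist y z := by
      rw [dist_eq_norm, dist_eq_norm]
      have : z - (y + c • (z - y)) = (1 - c) • (z - y) := by
        rw [sub_smul, one_smul]; abel
      rw [this, norm_smul, norm_sub_rev z y]
      simp [abs_of_nonneg (by linarith [hc.2] : (0:ℝ) ≤ 1 - c)]
    rw [h1]
    nlinarith [dist_nonneg (x := y) (y := z), hc.1, hc.2]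

lemma oriDist_eq_neg_infDist_frontier (hΩo : IsOpen Ω) (hΩne : Ω.Nonempty)
    (hΩc : Ωᶜ.Nonempty) {y : E n} (hy : y ∈ Ω) :
    oriDist Ω y = - Metric.infDist y (frontier Ω) := by
  have h1 : Metric.infDist y Ω = 0 := Metric.infDist_zero_of_mem hy
  have hby : oriDist Ω y = - Metric.infDist y Ωᶜ := by simp [oriDist, h1]
  obtain ⟨q, hqm, hq⟩ := hΩo.isClosed_compl.exists_infDist_eq_dist hΩc y
  have hbq : 0 ≤ oriDist Ω q := by
    have : Metric.infDist q Ωᶜ = 0 := Metric.infDist_zero_of_mem hqm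
    simp [oriDist, this, Metric.infDist_nonneg]
  have hbyle : oriDist Ω y ≤ 0 := oriDist_nonpos_of_mem_closure (subset_closure hy)
  obtain ⟨w, hwF, hw1, _⟩ := oriDist_crossing hΩo hΩne hΩc hbyle hbq
  have hle1 : Metric.infDist y (frontier Ω) ≤ Metric.infDist y Ωᶜ := by
    calc Metric.infDist y (frontier Ω) ≤ dist y w := Metric.infDist_le_dist_of_mem hwF
    _ ≤ dist y q := hw1
    _ = Metric.infDist y Ωᶜ := hq.symm
  have hle2 : Metric.infDist y Ωᶜ ≤ Metric.infDist y (frontier Ω) := by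
    refine Metric.infDist_le_infDist_of_subset ?_ ⟨w, hwF⟩
    rw [hΩo.frontier_eq]
    exact fun z hz => hz.2
  rw [hby, le_antisymm hle2 hle1]

lemma oriDist_eq_infDist_frontier (hΩo : IsOpen Ω) (hΩne : Ω.Nonempty)
    (hΩc : Ωᶜ.Nonempty) {y : E n} (hy : y ∉ closure Ω) :
    oriDist Ω y = Metric.infDist y (frontier Ω) := by
  have h2 : Metric.infDist y Ωᶜ = 0 :=
    Metric.infDist_zero_of_mem (fun h => hy (subset_closure h))
  have hby : oriDist Ω y = Metric.infDist y Ω := by simp [oriDist, h2]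
  obtain ⟨q, hqm, hq⟩ := isClosed_closure.exists_infDist_eq_dist hΩne.closure y
  rw [Metric.infDist_closure] at hq
  have hbq : oriDist Ω q ≤ 0 := oriDist_nonpos_of_mem_closure hqm
  have hbyge : 0 ≤ oriDist Ω y := by
    rw [hby]; exact Metric.infDist_nonneg
  obtain ⟨w, hwF, _, hw2⟩ := oriDist_crossing hΩo hΩne hΩc hbq hbyge
  have hle1 : Metric.infDist y (frontier Ω) ≤ Metric.infDist y Ω := by
    calc Metric.infDist y (frontier Ω) ≤ dist y w := Metric.infDist_le_dist_of_mem hwF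
    _ ≤ dist q y := hw2
    _ = Metric.infDist y Ω := by rw [dist_comm]; exact hq.symm
  have hle2 : Metric.infDist y Ω ≤ Metric.infDist y (frontier Ω) := by
    rw [← Metric.infDist_closure]
    refine Metric.infDist_le_infDist_of_subset ?_ ⟨w, hwF⟩
    exact fun z hz => hz.1
  rw [hby, le_antisymm hle2 hle1]

/-- The key "eikonal" step: near any non-frontier point `y` there is a point `m`
(halfway towards the nearest frontier point) with `|b y - b m| = dist y m > 0`. -/
lemma oriDist_eikonal_aux (hΩo : IsOpen Ω) (hΩne : Ω.Nonempty)
    (hF : (frontier Ω).Nonempty) {y : E n} (hy : y ∉ frontier Ω) :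
    ∃ m : E n, 0 < dist y m ∧ dist y m ≤ Metric.infDist y (frontier Ω) ∧
      |oriDist Ω y - oriDist Ω m| = dist y m := by
  have hΩc : Ωᶜ.Nonempty := by
    obtain ⟨w, hw⟩ := hF
    exact ⟨w, by rw [hΩo.frontier_eq] at hw; exact hw.2⟩
  have hdpos : 0 < Metric.infDist y (frontier Ω) :=
    (isClosed_frontier.notMem_iff_infDist_pos hF).mp hy
  obtain ⟨p, hpF, hp⟩ := isClosed_frontier.exists_infDist_eq_dist hF y
  rw [hp] at hdpos ⊢
  set m := y + (1/2 : ℝ) • (p - y) with hm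
  have hdym : dist y m = dist y p / 2 := by
    rw [dist_eq_norm, dist_eq_norm y p, hm]
    have h0 : y - (y + (1/2 : ℝ) • (p - y)) = (1/2 : ℝ) • (y - p) := by module
    rw [h0, norm_smul]
    simp; ring
  have hdmp : dist m p = dist y p / 2 := by
    rw [dist_eq_norm, dist_eq_norm y p, hm]
    have h0 : y + (1/2 : ℝ) • (p - y) - p = (1/2 : ℝ) • (y - p) := by module
    rw [h0, norm_smul]
    simp; ring
  have hinfm : Metric.infDist m (frontier Ω) = dist y p / 2 := by
    have hle : Metric.infDist m (frontier Ω) ≤ dist y p / 2 := by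
      rw [← hdmp]; exact Metric.infDist_le_dist_of_mem hpF
    have htri := Metric.infDist_le_infDist_add_dist (x := y) (y := m) (s := frontier Ω)
    rw [hp, dist_comm y m] at htri
    rw [dist_comm y m] at hdym
    linarith
  have hsep : ∀ w ∈ frontier Ω, dist y w ≤ dist y m → False := by
    intro w hwF hle
    have h1 : dist y p ≤ dist y w := by
      rw [← hp]; exact Metric.infDist_le_dist_of_mem hwF
    rw [hdym] at hle
    linarith
  refine ⟨m, by rw [hdym]; linarith, by rw [hdym]; linarith, ?_⟩
  by_cases hyΩ : y ∈ closure Ω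
  · have hyΩ' : y ∈ Ω := by
      by_contra hno
      exact hy (by rw [hΩo.frontier_eq]; exact ⟨hyΩ, hno⟩)
    have hby : oriDist Ω y = -dist y p := by
      rw [oriDist_eq_neg_infDist_frontier hΩo hΩne hΩc hyΩ', hp]
    have hmΩ : m ∈ Ω := by
      by_contra hno
      have hbm : 0 ≤ oriDist Ω m := by
        have : Metric.infDist m Ωᶜ = 0 := Metric.infDist_zero_of_mem hno
        simp [oriDist, this, Metric.infDist_nonneg]
      obtain ⟨w, hwF, hw1, _⟩ := oriDist_crossing hΩo hΩne hΩc
        (oriDist_nonpos_of_mem_closure hyΩ) hbm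
      exact hsep w hwF hw1
    have hbm : oriDist Ω m = -(dist y p / 2) := by
      rw [oriDist_eq_neg_infDist_frontier hΩo hΩne hΩc hmΩ, hinfm]
    rw [hby, hbm, hdym, abs_of_nonpos (by linarith)]
    ring
  · have hby : oriDist Ω y = dist y p := by
      rw [oriDist_eq_infDist_frontier hΩo hΩne hΩc hyΩ, hp]
    have hmΩ : m ∉ closure Ω := by
      by_contra hno
      have hbm : oriDist Ω m ≤ 0 := oriDist_nonpos_of_mem_closure hno
      have hbyge : 0 ≤ oriDist Ω y := by rw [hby]; linarith
      obtain ⟨w, hwF, _, hw2⟩ := oriDist_crossing hΩo hΩne hΩc hbm hbyge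
      rw [dist_comm m y] at hw2
      exact hsep w hwF hw2
    have hbm : oriDist Ω m = dist y p / 2 := by
      rw [oriDist_eq_infDist_frontier hΩo hΩne hΩc hmΩ, hinfm]
    rw [hby, hbm, hdym, abs_of_nonneg (by linarith)]
    ring

end Aux

set_option maxHeartbeats 2000000 in
/-- Lemma 4.1 of the paper: let `Ω ⊂ ℝⁿ` be a bounded open set with
`C²` boundary, `(t,x) ∈ (0,T) × ∂Ω`, `ν(x)` the outward unit normal to `∂Ω` at `x`, and
let `v ∈ ℝⁿ` satisfy `⟨v,ν(x)⟩ = 0`.  Then there exists an absolutely continuous curve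
`γ̂ : [0,T] → Ω̄` with `γ̂(t) = x` which is differentiable at `t` with `γ̂'(t) = v`. -/
theorem stmt11 {n : ℕ} (T : ℝ) (hT : 0 < T)
    (Ω : Set (E n)) (hΩo : IsOpen Ω) (hΩne : Ω.Nonempty)
    (hΩb : Bornology.IsBounded Ω) (hΩ2 : HasC2Boundary Ω)
    (t : ℝ) (ht : t ∈ Set.Ioo 0 T)
    (x : E n) (hx : x ∈ frontier Ω)
    (v : E n) (hv : (inner ℝ v (outerNormal Ω x) : ℝ) = 0) :
    ∃ γ : ℝ → E n, γ ∈ AdmCurves Ω T ∧ γ t = x ∧ HasDerivAt γ v t := by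
  obtain ⟨ρ, hρ, hb2⟩ := hΩ2
  set U : Set (E n) := {y | ∃ x' ∈ frontier Ω, dist y x' < ρ} with hUdef
  have hUopen : IsOpen U := by
    rw [Metric.isOpen_iff]
    rintro y ⟨x', hx', hlt⟩
    refine ⟨ρ - dist y x', by linarith, fun z hz => ⟨x', hx', ?_⟩⟩
    rw [Metric.mem_ball] at hz
    have := dist_triangle z y x'
    linarith
  have hxU : x ∈ U := ⟨x, hx, by simpa using hρ⟩
  have hΩc : Ωᶜ.Nonempty := ⟨x, by rw [hΩo.frontier_eq] at hx; exact hx.2⟩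
  have hF : (frontier Ω).Nonempty := ⟨x, hx⟩
  have hdiff : ∀ z ∈ U, DifferentiableAt ℝ (oriDist Ω) z := fun z hz =>
    (hb2.contDiffAt (hUopen.mem_nhds hz)).differentiableAt (by norm_num)
  have hbx0 : oriDist Ω x = 0 := oriDist_eq_zero_of_mem_frontier hx
  have hDf : ∀ w : E n, (fderiv ℝ (oriDist Ω) x) w = (inner ℝ (outerNormal Ω x) w : ℝ) := by
    intro w
    unfold outerNormal gradient
    rw [InnerProductSpace.toDual_symm_apply]
  -- Taylor estimate
  have h2 : ContDiffAt ℝ 1 (fderiv ℝ (oriDist Ω)) x :=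
    (hb2.contDiffAt (hUopen.mem_nhds hxU)).fderiv_right (by norm_num)
  obtain ⟨K, s, hsnh, hKlip⟩ := h2.exists_lipschitzOnWith
  obtain ⟨r0, hr0pos, hr0sub⟩ : ∃ r0 > 0, Metric.closedBall x r0 ⊆ s ∩ U := by
    obtain ⟨ε, hε, hsub⟩ := Metric.mem_nhds_iff.mp (Filter.inter_mem hsnh (hUopen.mem_nhds hxU))
    exact ⟨ε/2, by linarith, (Metric.closedBall_subset_ball (by linarith)).trans hsub⟩
  have hxs : x ∈ s := mem_of_mem_nhds hsnh
  have hTaylor : ∀ w : E n, ‖w‖ ≤ r0 →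
      oriDist Ω (x + w) ≤ (inner ℝ (outerNormal Ω x) w : ℝ) + (K : ℝ) * ‖w‖^2 := by
    intro w hw
    have hsub : Metric.closedBall x ‖w‖ ⊆ s ∩ U :=
      (Metric.closedBall_subset_closedBall hw).trans hr0sub
    have hder : ∀ z ∈ Metric.closedBall x ‖w‖,
        HasFDerivWithinAt (oriDist Ω) (fderiv ℝ (oriDist Ω) z) (Metric.closedBall x ‖w‖) z :=
      fun z hz => (hdiff z (hsub hz).2).hasFDerivAt.hasFDerivWithinAt
    have hbound : ∀ z ∈ Metric.closedBall x ‖w‖,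
        ‖fderiv ℝ (oriDist Ω) z - fderiv ℝ (oriDist Ω) x‖ ≤ (K : ℝ) * ‖w‖ := by
      intro z hz
      have h1 := hKlip.dist_le_mul z (hsub hz).1 x hxs
      rw [dist_eq_norm] at h1
      refine h1.trans ?_
      have h3 : dist z x ≤ ‖w‖ := Metric.mem_closedBall.mp hz
      have hK0 : (0:ℝ) ≤ (K:ℝ) := K.coe_nonneg
      nlinarith [dist_nonneg (x := z) (y := x)]
    have hxw : x + w ∈ Metric.closedBall x ‖w‖ := by
      simp [Metric.mem_closedBall, dist_eq_norm]
    have hmv := Convex.norm_image_sub_le_of_norm_hasFDerivWithin_le' hder hbound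
      (convex_closedBall x ‖w‖) (Metric.mem_closedBall_self (norm_nonneg w)) hxw
    rw [add_sub_cancel_left, hbx0, sub_zero, hDf w, Real.norm_eq_abs] at hmv
    have := abs_le.mp hmv
    nlinarith [this.2]
  -- the outer normal is nonzero
  have hνne : outerNormal Ω x ≠ 0 := by
    intro hν0
    have hDf0 : fderiv ℝ (oriDist Ω) x = 0 := by
      ext w
      rw [hDf w, hν0]
      simp
    have hcont : ContinuousOn (fderiv ℝ (oriDist Ω)) U :=
      hb2.continuousOn_fderiv_of_isOpen hUopen (by norm_num)
    have hcAt : ContinuousAt (fderiv ℝ (oriDist Ω)) x := hcont.continuousAt (hUopen.mem_nhds hxU)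
    have hev : ∀ᶠ z in 𝓝 x, dist (fderiv ℝ (oriDist Ω) z) (fderiv ℝ (oriDist Ω) x) < 1/2 :=
      Metric.tendsto_nhds.mp hcAt (1/2) (by norm_num)
    obtain ⟨ε, hεpos, hball⟩ := Metric.eventually_nhds_iff.mp (hev.and (hUopen.mem_nhds hxU))
    have hint : interior (frontier Ω) = ∅ := by
      rw [← frontier_compl]
      exact interior_frontier hΩo.isClosed_compl
    have hnsub : ¬ (Metric.ball x (ε/4) ⊆ frontier Ω) := by
      intro hsubF
      have h1 : Metric.ball x (ε/4) ⊆ interior (frontier Ω) :=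
        interior_maximal hsubF Metric.isOpen_ball
      rw [hint] at h1
      exact (h1 (Metric.mem_ball_self (by linarith))).elim
    obtain ⟨y, hyball, hyF⟩ := Set.not_subset.mp hnsub
    obtain ⟨m, hm1, hm2, hm3⟩ := oriDist_eikonal_aux hΩo hΩne hF hyF
    have hdyx : dist y x < ε/4 := Metric.mem_ball.mp hyball
    have hdy : Metric.infDist y (frontier Ω) ≤ dist y x := Metric.infDist_le_dist_of_mem hx
    have hym : dist y m < ε/4 := lt_of_le_of_lt (hm2.trans hdy) hdyx
    have hyball' : y ∈ Metric.ball x ε := Metric.mem_ball.mpr (by linarith)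
    have hmball : m ∈ Metric.ball x ε := by
      rw [Metric.mem_ball]
      have := dist_triangle m y x
      rw [dist_comm m y] at this
      linarith
    have hder : ∀ z ∈ Metric.ball x ε,
        HasFDerivWithinAt (oriDist Ω) (fderiv ℝ (oriDist Ω) z) (Metric.ball x ε) z :=
      fun z hz => (hdiff z (hball (Metric.mem_ball.mp hz)).2).hasFDerivAt.hasFDerivWithinAt
    have hbound : ∀ z ∈ Metric.ball x ε, ‖fderiv ℝ (oriDist Ω) z‖ ≤ 1/2 := by
      intro z hz
      have h1 := (hball (Metric.mem_ball.mp hz)).1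
      rw [hDf0, dist_zero_right] at h1
      linarith
    have hmv := Convex.norm_image_sub_le_of_norm_hasFDerivWithin_le hder hbound
      (convex_ball x ε) hmball hyball'
    rw [Real.norm_eq_abs, ← dist_eq_norm] at hmv
    rw [hm3] at hmv
    linarith
  -- constants
  obtain ⟨C, hCdef⟩ : ∃ C : ℝ, C = (K : ℝ) := ⟨_, rfl⟩
  have hC0 : 0 ≤ C := hCdef ▸ K.coe_nonneg
  obtain ⟨l, hldef⟩ : ∃ l : ℝ, l = ‖outerNormal Ω x‖ := ⟨_, rfl⟩
  have hl0 : 0 < l := hldef ▸ norm_pos_iff.mpr hνne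
  obtain ⟨K', hK'def⟩ : ∃ K' : ℝ, K' = (C * ‖v‖^2 + C + 1) / l^2 := ⟨_, rfl⟩
  have hK'0 : 0 < K' := by rw [hK'def]; positivity
  have hK'eq : K' * l^2 = C * ‖v‖^2 + C + 1 := by
    rw [hK'def]; field_simp
  obtain ⟨A, hAdef⟩ : ∃ A : ℝ, A = 2*C*‖v‖*K'*l + C*K'^2*l^2 := ⟨_, rfl⟩
  have hA0 : 0 ≤ A := by rw [hAdef]; positivity
  obtain ⟨B₁, hB₁def⟩ : ∃ B₁ : ℝ, B₁ = ‖v‖ + K'*l := ⟨_, rfl⟩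
  have hB₁0 : 0 ≤ B₁ := by rw [hB₁def]; positivity
  obtain ⟨δ, hδdef⟩ : ∃ δ : ℝ, δ = min 1 (min (1/(A+1)) (r0/(B₁+1))) := ⟨_, rfl⟩
  have hδpos : 0 < δ := by
    rw [hδdef]
    exact lt_min (by norm_num) (lt_min (by positivity) (by positivity))
  have hδ1 : δ ≤ 1 := hδdef ▸ min_le_left _ _
  have hδA : δ ≤ 1/(A+1) := hδdef ▸ (min_le_right _ _).trans (min_le_left _ _)
  have hδr : δ ≤ r0/(B₁+1) := hδdef ▸ (min_le_right _ _).trans (min_le_right _ _)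
  -- the key pointwise estimate
  have hkey : ∀ h : ℝ, |h| ≤ δ →
      oriDist Ω (x + (h • v - (K' * h^2) • outerNormal Ω x)) ≤ 0 := by
    intro h hh
    have hh0 : 0 ≤ |h| := abs_nonneg h
    have hh2 : h^2 = |h|^2 := (sq_abs h).symm
    have hwnorm : ‖h • v - (K' * h^2) • outerNormal Ω x‖ ≤ |h| * ‖v‖ + K' * h^2 * l := by
      refine (norm_sub_le _ _).trans ?_
      rw [norm_smul, norm_smul, Real.norm_eq_abs, Real.norm_eq_abs,
        abs_of_nonneg (by positivity : (0:ℝ) ≤ K' * h^2), hldef]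
    have hw1 : ‖h • v - (K' * h^2) • outerNormal Ω x‖ ≤ |h| * (‖v‖ + K' * δ * l) := by
      refine hwnorm.trans ?_
      have h1 : K' * h^2 * l ≤ |h| * (K' * δ * l) := by
        rw [hh2]
        nlinarith [mul_le_mul_of_nonneg_left hh hh0, mul_nonneg hK'0.le hl0.le]
      nlinarith [norm_nonneg v]
    have hwr : ‖h • v - (K' * h^2) • outerNormal Ω x‖ ≤ r0 := by
      refine hw1.trans ?_
      have h1 : |h| * (‖v‖ + K' * δ * l) ≤ δ * B₁ := by
        have h2 : ‖v‖ + K' * δ * l ≤ B₁ := by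
          rw [hB₁def]
          nlinarith [mul_le_mul_of_nonneg_left hδ1 (mul_nonneg hK'0.le hl0.le)]
        nlinarith [norm_nonneg v]
      refine h1.trans ?_
      rw [le_div_iff₀ (by positivity)] at hδr
      nlinarith [hδpos.le, hB₁0]
    have htay := hTaylor _ hwr
    have hinner : (inner ℝ (outerNormal Ω x) (h • v - (K' * h^2) • outerNormal Ω x) : ℝ)
        = - (K' * h^2 * l^2) := by
      rw [inner_sub_right, real_inner_smul_right, real_inner_smul_right]
      rw [real_inner_comm v (outerNormal Ω x), hv, real_inner_self_eq_norm_sq, ← hldef]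
      ring
    refine htay.trans ?_
    rw [hinner, ← hCdef]
    have hw2 : ‖h • v - (K' * h^2) • outerNormal Ω x‖^2 ≤ h^2 * (‖v‖ + K' * δ * l)^2 := by
      have := mul_self_le_mul_self (norm_nonneg (h • v - (K' * h^2) • outerNormal Ω x)) hw1
      nlinarith [this, sq_abs h]
    have hcoef : C * (‖v‖ + K' * δ * l)^2 ≤ K' * l^2 := by
      rw [hK'eq]
      have hδA' : A * δ ≤ 1 := by
        rw [le_div_iff₀ (by positivity)] at hδA
        nlinarith [hδpos.le]
      have hδ2 : δ^2 ≤ δ := by nlinarith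
      rw [hAdef] at hδA'
      have hq : C*K'^2*l^2*δ^2 ≤ C*K'^2*l^2*δ :=
        mul_le_mul_of_nonneg_left hδ2 (by positivity)
      nlinarith [hq, hδA', hC0]
    nlinarith [sq_nonneg h,
      mul_nonneg hC0 (sq_nonneg ‖h • v - (K' * h^2) • outerNormal Ω x‖)]
  -- the curve
  have hδne : δ ≠ 0 := ne_of_gt hδpos
  have hder : ∀ s : ℝ, HasDerivAt (fun u : ℝ => δ * Real.sin ((u - t)/δ))
      (Real.cos ((s - t)/δ)) s := by
    intro s
    have h1 : HasDerivAt (fun u : ℝ => (u - t)/δ) (1/δ) s :=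
      ((hasDerivAt_id s).sub_const t).div_const δ
    have h2 := (Real.hasDerivAt_sin ((s - t)/δ)).comp s h1
    have h3 := h2.const_mul δ
    rw [show δ * (Real.cos ((s - t) / δ) * (1 / δ)) = Real.cos ((s - t) / δ) by
      rw [mul_comm, mul_assoc, one_div_mul_cancel hδne, mul_one]] at h3
    exact h3
  set γ : ℝ → E n := fun u =>
    x + ((δ * Real.sin ((u - t)/δ)) • v - (K' * (δ * Real.sin ((u - t)/δ))^2) • outerNormal Ω x)
    with hγdef
  set g : ℝ → E n := fun u => Real.cos ((u - t)/δ) • v -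
    (K' * (((2:ℕ):ℝ) * (δ * Real.sin ((u - t)/δ)) ^ (2-1) * Real.cos ((u - t)/δ))) •
      outerNormal Ω x with hgdef
  have hg : ∀ u : ℝ, HasDerivAt γ (g u) u := by
    intro u
    exact (((hder u).smul_const v).sub
      ((((hder u).pow 2).const_mul K').smul_const (outerNormal Ω x))).const_add x
  have hgcont : Continuous g := by
    have hc1 : Continuous fun u : ℝ => (u - t)/δ :=
      (continuous_id.sub continuous_const).div_const δ
    have hcos : Continuous fun u : ℝ => Real.cos ((u - t)/δ) := Real.continuous_cos.comp hc1
    have hsin : Continuous fun u : ℝ => δ * Real.sin ((u - t)/δ) :=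
      continuous_const.mul (Real.continuous_sin.comp hc1)
    exact (hcos.smul continuous_const).sub
      ((continuous_const.mul (((continuous_const.mul (hsin.pow _)).mul hcos))).smul
        continuous_const)
  have hγt : γ t = x := by
    rw [hγdef]
    norm_num
  have hγ'v : HasDerivAt γ v t := by
    have h0 := hg t
    rw [hgdef] at h0
    norm_num at h0
    exact h0
  have hmem : ∀ u ∈ Set.Icc 0 T, γ u ∈ closure Ω := by
    intro u _
    refine mem_closure_of_oriDist_nonpos hΩne ?_
    refine hkey (δ * Real.sin ((u - t)/δ)) ?_
    rw [abs_mul, abs_of_pos hδpos]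
    exact mul_le_of_le_one_right (le_of_lt hδpos) (abs_le.mpr
      ⟨Real.neg_one_le_sin _, Real.sin_le_one _⟩)
  refine ⟨γ, ⟨⟨g, hgcont.intervalIntegrable 0 T, ?_⟩, hmem⟩, hγt, hγ'v⟩
  intro u _
  have hFTC := intervalIntegral.integral_eq_sub_of_hasDerivAt
    (fun r _ => hg r) (hgcont.intervalIntegrable 0 u)
  rw [hFTC]
  abel
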